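/- arXiv:2603.25161 — 2 statements merged into one kernel-verified Lean document; each statement's English description precedes it below -/
import Mathlib

section
/- Let L be the Laplacian matrix of a connected weighted undirected graph on N vertices and Q ∈ ℝ^{n×n} symmetric positive definite. If a sequence x : ℕ → ℝ^{Nn} satisfies ∑_{k=0}^∞ x[k]ᵀ (L ⊗ Q) x[k] < ∞, then for every pair of agents i, j, the disagreement x_i[k] − x_j[k] tends to 0 as k → ∞, where x_i[k] ∈ ℝⁿ denotes the i-th block of x[k]. -/
open Matrix Kronecker Filter

theorem posSemidef_iff_eq_transpose_mul_self {m : Type*} [Fintype m] [DecidableEq m]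
    {A : Matrix m m ℝ} : A.PosSemidef ↔ ∃ B : Matrix m m ℝ, A = Bᴴ * B := by
  open MatrixOrder in
  constructor
  · intro hA
    obtain ⟨B, rfl⟩ := CStarAlgebra.nonneg_iff_eq_star_mul_self.mp hA.nonneg
    exact ⟨B, by rw [star_eq_conjTranspose]⟩
  · rintro ⟨B, rfl⟩
    exact posSemidef_conjTranspose_mul_self B

/-- If `A` is PSD and the linear functional `T` vanishes on the kernel of `A`,
then `T` squared is dominated by the quadratic form of `A`. -/
lemma quad_dom {m : Type*} [Fintype m] [DecidableEq m] (A : Matrix m m ℝ) (hA : A.PosSemidef)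
    (T : ((m → ℝ) →ₗ[ℝ] ℝ)) (hT : ∀ v, A *ᵥ v = 0 → T v = 0) :
    ∃ c : ℝ, ∀ v, (T v) ^ 2 ≤ c * (v ⬝ᵥ A *ᵥ v) := by
  obtain ⟨B, rfl⟩ := posSemidef_iff_eq_transpose_mul_self.mp hA
  set Bl : (m → ℝ) →ₗ[ℝ] (m → ℝ) := B.mulVecLin with hBl
  have hker : LinearMap.ker Bl ≤ LinearMap.ker T := by
    intro v hv
    simp only [LinearMap.mem_ker, hBl, mulVecLin_apply] at hv ⊢
    apply hT
    rw [← mulVec_mulVec, hv, mulVec_zero]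
  set T' : ((m → ℝ) ⧸ LinearMap.ker Bl) →ₗ[ℝ] ℝ := (LinearMap.ker Bl).liftQ T hker with hT'
  set S₀ : (LinearMap.range Bl) →ₗ[ℝ] ℝ := T' ∘ₗ Bl.quotKerEquivRange.symm.toLinearMap with hS₀
  obtain ⟨S, hS⟩ := S₀.exists_extend
  have hfac : ∀ v, T v = S (B *ᵥ v) := by
    intro v
    have h1 : S (B *ᵥ v) = S₀ ⟨Bl v, LinearMap.mem_range_self _ v⟩ := by
      rw [← hS]; rfl
    rw [h1, hS₀]
    simp only [LinearMap.comp_apply, LinearEquiv.coe_coe]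
    rw [Bl.quotKerEquivRange_symm_apply_image, hT']
    simp
  refine ⟨∑ a, (S (fun b => if a = b then 1 else 0)) ^ 2, fun v => ?_⟩
  have hquad : v ⬝ᵥ (Bᴴ * B) *ᵥ v = ∑ a, (B *ᵥ v) a ^ 2 := by
    rw [← mulVec_mulVec, dotProduct_mulVec, vecMul_conjTranspose]
    simp only [star_trivial, dotProduct, Pi.star_apply, star_trivial]
    exact Finset.sum_congr rfl fun a _ => (sq ((B *ᵥ v) a)).symm
  rw [hquad, hfac]
  have := S.pi_apply_eq_sum_univ (B *ᵥ v)
  rw [this]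
  have hCS := Finset.sum_mul_sq_le_sq_mul_sq Finset.univ
    (fun a => S (fun b => if a = b then 1 else 0)) (fun a => (B *ᵥ v) a)
  calc (∑ a, (B *ᵥ v) a • S (fun b => if a = b then 1 else 0)) ^ 2
      = (∑ a, S (fun b => if a = b then 1 else 0) * (B *ᵥ v) a) ^ 2 := by
        congr 1; exact Finset.sum_congr rfl fun a _ => by rw [smul_eq_mul, mul_comm]
    _ ≤ (∑ a, (S (fun b => if a = b then 1 else 0)) ^ 2) * ∑ a, (B *ᵥ v) a ^ 2 := hCS

theorem stmt_8 {N n : ℕ}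
    (L : Matrix (Fin N) (Fin N) ℝ) (hL : L.PosSemidef)
    (hker : ∀ v : Fin N → ℝ, L *ᵥ v = 0 → ∃ c : ℝ, v = fun _ => c)
    (Q : Matrix (Fin n) (Fin n) ℝ) (hQ : Q.PosDef)
    (x : ℕ → (Fin N × Fin n) → ℝ)
    (hsum : Summable (fun k => x k ⬝ᵥ (L ⊗ₖ Q) *ᵥ x k)) :
    ∀ i j : Fin N,
      Tendsto (fun k => (fun l : Fin n => x k (i, l) - x k (j, l))) atTop (nhds 0) := by
  intro i j
  -- the Kronecker product is PSD
  have hA : (L ⊗ₖ Q).PosSemidef := by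
    obtain ⟨B1, hB1⟩ := posSemidef_iff_eq_transpose_mul_self.mp hL
    obtain ⟨B2, hB2⟩ := posSemidef_iff_eq_transpose_mul_self.mp hQ.posSemidef
    rw [posSemidef_iff_eq_transpose_mul_self]
    refine ⟨B1 ⊗ₖ B2, ?_⟩
    rw [hB1, hB2, mul_kronecker_mul]
    congr 1
  -- kernel of the Kronecker product forces agreement of blocks
  have hkerA : ∀ v : (Fin N × Fin n) → ℝ, (L ⊗ₖ Q) *ᵥ v = 0 → ∀ l, v (i, l) = v (j, l) := by
    intro v hv l
    have hu : ∀ a : Fin N, Q *ᵥ (fun m => ∑ b, L a b * v (b, m)) = 0 := by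
      intro a
      funext l'
      have h := congrFun hv (a, l')
      simp only [mulVec, dotProduct, Fintype.sum_prod_type, kroneckerMap_apply,
        Pi.zero_apply] at h ⊢
      rw [← h]
      rw [Finset.sum_comm]
      refine Finset.sum_congr rfl fun m _ => ?_
      rw [Finset.mul_sum]
      refine Finset.sum_congr rfl fun b _ => by ring
    have hu0 : ∀ a : Fin N, (fun m => ∑ b, L a b * v (b, m)) = 0 := by
      intro a
      by_contra hne
      have := hQ.dotProduct_mulVec_pos hne
      rw [hu a, dotProduct_zero] at this
      exact lt_irrefl 0 this
    have hL0 : L *ᵥ (fun b => v (b, l)) = 0 := by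
      funext a
      have := congrFun (hu0 a) l
      simpa [mulVec, dotProduct] using this
    obtain ⟨c, hc⟩ := hker _ hL0
    have h1 : v (i, l) = c := congrFun hc i
    have h2 : v (j, l) = c := congrFun hc j
    rw [h1, h2]
  rw [tendsto_pi_nhds]
  intro l
  -- the linear functional measuring disagreement in coordinate l
  set T : (((Fin N × Fin n) → ℝ) →ₗ[ℝ] ℝ) :=
    (LinearMap.proj (R := ℝ) (φ := fun _ : Fin N × Fin n => ℝ) (i, l)) -
      (LinearMap.proj (R := ℝ) (φ := fun _ : Fin N × Fin n => ℝ) (j, l)) with hTdef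
  have hTv : ∀ v, T v = v (i, l) - v (j, l) := fun v => by
    rw [hTdef]
    simp only [LinearMap.sub_apply, LinearMap.proj_apply]
  obtain ⟨c, hc⟩ := quad_dom (L ⊗ₖ Q) hA T (fun v hv => by
    rw [hTv, hkerA v hv l, sub_self])
  have hf0 : Tendsto (fun k => x k ⬝ᵥ (L ⊗ₖ Q) *ᵥ x k) atTop (nhds 0) :=
    hsum.tendsto_atTop_zero
  have hsq : Tendsto (fun k => (x k (i, l) - x k (j, l)) ^ 2) atTop (nhds 0) := by
    have hg : Tendsto (fun k => c * (x k ⬝ᵥ (L ⊗ₖ Q) *ᵥ x k)) atTop (nhds 0) := by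
      have := hf0.const_mul c
      simpa using this
    refine squeeze_zero (fun k => sq_nonneg _) (fun k => ?_) hg
    have := hc (x k)
    rwa [hTv] at this
  have habs : Tendsto (fun k => |x k (i, l) - x k (j, l)|) atTop (nhds 0) := by
    have hcont := (Real.continuous_sqrt.tendsto 0).comp hsq
    rw [Real.sqrt_zero] at hcont
    refine hcont.congr fun k => ?_
    simp [Function.comp, Real.sqrt_sq_eq_abs]
  rw [show ((0 : Fin n → ℝ) l) = (0 : ℝ) from rfl]
  exact (tendsto_zero_iff_abs_tendsto_zero _).mpr habs
end

section
/- Let e : ℕ → ℝⁿ and g : ℕ → ℝ satisfy: (i) e 0 = 0, (ii) there exist constants σ > 0, α ≥ 0 with σ(1+η⁻¹)α < 1 for some η > 0, such that for all k ≥ 1, ‖e k‖² ≤ σ(1+η)·g(k−1) + σ(1+η⁻¹)α·‖e(k−1)‖², with g(k) ≥ 0 for all k. Then ∑_{k=0}^{∞} ‖e k‖² ≤ [σ(1+η)/(1 − σ(1+η⁻¹)α)] · ∑_{k=0}^{∞} g(k), where both sides may be infinite. -/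
theorem stmt_11 {n : ℕ} (e : ℕ → EuclideanSpace ℝ (Fin n)) (g : ℕ → ℝ)
    (he0 : e 0 = 0) (hg : ∀ k, 0 ≤ g k)
    (σ α η : ℝ) (hσ : 0 < σ) (hα : 0 ≤ α) (hη : 0 < η)
    (hcontr : σ * (1 + η⁻¹) * α < 1)
    (hrec : ∀ k, 1 ≤ k →
      ‖e k‖ ^ 2 ≤ σ * (1 + η) * g (k - 1) + σ * (1 + η⁻¹) * α * ‖e (k - 1)‖ ^ 2) :
    (∑' k, ENNReal.ofReal (‖e k‖ ^ 2)) ≤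
      ENNReal.ofReal (σ * (1 + η) / (1 - σ * (1 + η⁻¹) * α)) *
        ∑' k, ENNReal.ofReal (g k) := by
  set a := σ * (1 + η) with hadef
  set b := σ * (1 + η⁻¹) * α with hbdef
  have hηinv : 0 < η⁻¹ := inv_pos.mpr hη
  have ha : 0 < a := by positivity
  have hb0 : 0 ≤ b := by positivity
  have hb1 : b < 1 := hcontr
  have h1b : 0 < 1 - b := by linarith
  have hcpos : 0 < a / (1 - b) := div_pos ha h1b
  by_cases hG : (∑' k, ENNReal.ofReal (g k)) = ⊤
  · rw [hG, ENNReal.mul_top]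
    · exact le_top
    · simp only [ne_eq, ENNReal.ofReal_eq_zero, not_le]
      exact hcpos
  · -- g is summable
    have hgsum : Summable g := by
      have h1 : Summable (fun k => (g k).toNNReal) :=
        ENNReal.tsum_coe_ne_top_iff_summable.mp (by simpa [ENNReal.ofReal] using hG)
      exact (NNReal.summable_coe.mpr h1).congr (fun k => Real.coe_toNNReal _ (hg k))
    set Gr := ∑' k, g k with hGr
    have hGrnn : 0 ≤ Gr := tsum_nonneg hg
    have hpart : ∀ N, ∑ i ∈ Finset.range N, g i ≤ Gr := fun N =>
      Summable.sum_le_tsum _ (fun i _ => hg i) hgsum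
    have henn : ∀ k, 0 ≤ ‖e k‖ ^ 2 := fun k => sq_nonneg _
    -- bound on partial sums
    have key : ∀ N, ∑ i ∈ Finset.range N, ‖e i‖ ^ 2 ≤ a * Gr / (1 - b) := by
      intro N
      rcases Nat.eq_zero_or_pos N with h0 | hpos
      · simp only [h0, Finset.range_zero, Finset.sum_empty]
        positivity
      · obtain ⟨M, rfl⟩ := Nat.exists_eq_add_of_le hpos
        set SN := ∑ i ∈ Finset.range (1 + M), ‖e i‖ ^ 2 with hSN
        have step : SN ≤ a * Gr + b * SN := by
          have h1 : SN = ∑ i ∈ Finset.range M, ‖e (i + 1)‖ ^ 2 + ‖e 0‖ ^ 2 := by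
            rw [hSN, Nat.add_comm 1 M, Finset.sum_range_succ']
          have h2 : ∀ i ∈ Finset.range M, ‖e (i + 1)‖ ^ 2 ≤ a * g i + b * ‖e i‖ ^ 2 := by
            intro i _
            have := hrec (i + 1) (Nat.le_add_left 1 i)
            simpa using this
          have h3 : ∑ i ∈ Finset.range M, ‖e (i + 1)‖ ^ 2 ≤
              a * (∑ i ∈ Finset.range M, g i) + b * ∑ i ∈ Finset.range M, ‖e i‖ ^ 2 := by
            rw [Finset.mul_sum, Finset.mul_sum, ← Finset.sum_add_distrib]
            exact Finset.sum_le_sum h2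
          have h4 : ∑ i ∈ Finset.range M, ‖e i‖ ^ 2 ≤ SN := by
            rw [hSN]
            apply Finset.sum_le_sum_of_subset_of_nonneg
            · exact Finset.range_subset_range.mpr (by omega)
            · intro i _ _; exact henn i
          have h5 : ‖e 0‖ ^ 2 = 0 := by rw [he0]; simp
          calc SN = ∑ i ∈ Finset.range M, ‖e (i + 1)‖ ^ 2 := by rw [h1, h5, add_zero]
            _ ≤ a * (∑ i ∈ Finset.range M, g i) + b * ∑ i ∈ Finset.range M, ‖e i‖ ^ 2 := h3
            _ ≤ a * Gr + b * SN := by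
                gcongr
                exact hpart M
        exact (le_div_iff₀ h1b).mpr (by linarith)
    have hesum : Summable (fun k => ‖e k‖ ^ 2) :=
      summable_of_sum_range_le henn key
    have htsum : ∑' k, ‖e k‖ ^ 2 ≤ a * Gr / (1 - b) :=
      Real.tsum_le_of_sum_range_le henn key
    calc (∑' k, ENNReal.ofReal (‖e k‖ ^ 2))
        = ENNReal.ofReal (∑' k, ‖e k‖ ^ 2) :=
          (ENNReal.ofReal_tsum_of_nonneg henn hesum).symm
      _ ≤ ENNReal.ofReal (a / (1 - b) * Gr) := by
          apply ENNReal.ofReal_le_ofReal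
          rw [div_mul_eq_mul_div]
          exact htsum
      _ = ENNReal.ofReal (a / (1 - b)) * ENNReal.ofReal Gr := by
          rw [ENNReal.ofReal_mul hcpos.le]
      _ = ENNReal.ofReal (a / (1 - b)) * ∑' k, ENNReal.ofReal (g k) := by
          rw [ENNReal.ofReal_tsum_of_nonneg hg hgsum]
end
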